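/- For p = 2: the function f(t₁,t₂) = t₁^{n₁} t₂^{n₂} (n₂/n · t₁^{−2}·n₁ + n₁/n · t₂^{−2}·n₂)^{n/2} restricted to t₁²+t₂²=1, t₁,t₂>0 has a unique critical point at (t₁,t₂) = (√(n₂/n), √(n₁/n)). Consequently the Willmore torus S^{n₁}(√(n₂/n)) × S^{n₂}(√(n₁/n)) is the unique principal Willmore orbit for the SO(n₁+1)×SO(n₂+1) action on S^{n+1}(1). -/

import Mathlib

open Real ContinuousLinearMap in
lemma willmore_hasFDerivAt (a p : ℝ) (n₁ n₂ : ℕ) (x y : ℝ) (hx : x ≠ 0) (hy : y ≠ 0)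
    (hG : a * x ^ (-2:ℤ) + a * y ^ (-2:ℤ) ≠ 0) :
    HasFDerivAt (fun t : ℝ × ℝ => t.1 ^ n₁ * t.2 ^ n₂ *
        (a * t.1 ^ (-2:ℤ) + a * t.2 ^ (-2:ℤ)) ^ p)
      ((((n₁:ℝ) * x ^ (n₁-1) * (y ^ n₂ * (a*x^(-2:ℤ)+a*y^(-2:ℤ))^p)
          + x ^ n₁ * y ^ n₂ * (p * (a*x^(-2:ℤ)+a*y^(-2:ℤ))^(p-1) * (a * ((-2:ℝ) * x ^ (-3:ℤ))))) •
         ContinuousLinearMap.fst ℝ ℝ ℝ)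
       + (((n₂:ℝ) * y ^ (n₂-1) * (x ^ n₁ * (a*x^(-2:ℤ)+a*y^(-2:ℤ))^p)
          + x ^ n₁ * y ^ n₂ * (p * (a*x^(-2:ℤ)+a*y^(-2:ℤ))^(p-1) * (a * ((-2:ℝ) * y ^ (-3:ℤ))))) •
         ContinuousLinearMap.snd ℝ ℝ ℝ)) (x, y) := by
  have hfst : HasFDerivAt (fun t : ℝ × ℝ => t.1) (ContinuousLinearMap.fst ℝ ℝ ℝ) (x, y) :=
    hasFDerivAt_fst
  have hsnd : HasFDerivAt (fun t : ℝ × ℝ => t.2) (ContinuousLinearMap.snd ℝ ℝ ℝ) (x, y) :=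
    hasFDerivAt_snd
  have h1 : HasFDerivAt (fun t : ℝ × ℝ => t.1 ^ n₁)
      (((n₁:ℝ) * x ^ (n₁-1)) • ContinuousLinearMap.fst ℝ ℝ ℝ) (x, y) :=
    (hasDerivAt_pow n₁ x).comp_hasFDerivAt _ hfst
  have h2 : HasFDerivAt (fun t : ℝ × ℝ => t.2 ^ n₂)
      (((n₂:ℝ) * y ^ (n₂-1)) • ContinuousLinearMap.snd ℝ ℝ ℝ) (x, y) :=
    (hasDerivAt_pow n₂ y).comp_hasFDerivAt _ hsnd
  have hzx := ((hasDerivAt_zpow (-2) x (Or.inl hx)).comp_hasFDerivAt (x,y) hfst).const_mul a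
  have hzy := ((hasDerivAt_zpow (-2) y (Or.inl hy)).comp_hasFDerivAt (x,y) hsnd).const_mul a
  have h3' := hzx.add hzy
  have e3 : (a • (((-2:ℤ):ℝ) * x ^ ((-2:ℤ) - 1)) • ContinuousLinearMap.fst ℝ ℝ ℝ
        + a • (((-2:ℤ):ℝ) * y ^ ((-2:ℤ) - 1)) • ContinuousLinearMap.snd ℝ ℝ ℝ)
      = ((a * ((-2:ℝ) * x ^ (-3:ℤ))) • ContinuousLinearMap.fst ℝ ℝ ℝ
        + (a * ((-2:ℝ) * y ^ (-3:ℤ))) • ContinuousLinearMap.snd ℝ ℝ ℝ) := by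
    refine ContinuousLinearMap.ext fun v => ?_
    have : ((-2:ℤ) - 1 : ℤ) = (-3:ℤ) := by norm_num
    simp [this, smul_eq_mul]
    ring
  rw [e3] at h3'
  have h3 : HasFDerivAt (fun t : ℝ × ℝ => a * t.1 ^ (-2:ℤ) + a * t.2 ^ (-2:ℤ))
      ((a * ((-2:ℝ) * x ^ (-3:ℤ))) • ContinuousLinearMap.fst ℝ ℝ ℝ
        + (a * ((-2:ℝ) * y ^ (-3:ℤ))) • ContinuousLinearMap.snd ℝ ℝ ℝ) (x, y) := h3'
  have h4 : HasFDerivAt (fun t : ℝ × ℝ =>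
      (a * t.1 ^ (-2:ℤ) + a * t.2 ^ (-2:ℤ)) ^ p)
      ((p * (a*x^(-2:ℤ)+a*y^(-2:ℤ))^(p-1)) •
        ((a * ((-2:ℝ) * x ^ (-3:ℤ))) • ContinuousLinearMap.fst ℝ ℝ ℝ
          + (a * ((-2:ℝ) * y ^ (-3:ℤ))) • ContinuousLinearMap.snd ℝ ℝ ℝ)) (x, y) :=
    by have := (Real.hasDerivAt_rpow_const (p := p) (x := a*x^(-2:ℤ)+a*y^(-2:ℤ))
      (Or.inl hG)).comp_hasFDerivAt (x,y) h3; exact this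
  have h5 := (h1.mul h2).mul h4
  have e5 : ∀ L₁ L₂ : (ℝ × ℝ) →L[ℝ] ℝ, L₁ = L₂ → HasFDerivAt _ L₁ (x,y) → HasFDerivAt
      (fun t : ℝ × ℝ => t.1 ^ n₁ * t.2 ^ n₂ * (a * t.1 ^ (-2:ℤ) + a * t.2 ^ (-2:ℤ)) ^ p)
      L₂ (x,y) := fun L₁ L₂ h hh => h ▸ hh
  refine e5 _ _ ?_ h5
  refine ContinuousLinearMap.ext fun v => ?_
  simp [smul_eq_mul]
  ring
open Real ContinuousLinearMap in


/-- For `p = 2`, the Willmore functional of the tori `S^{n₁}(t₁) × S^{n₂}(t₂) ⊂ S^{n+1}(1)`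
restricted to `t₁² + t₂² = 1`, `t₁, t₂ > 0`, has the unique critical point
`(t₁, t₂) = (√(n₂/n), √(n₁/n))`: the Willmore torus is the unique principal Willmore
orbit. -/
theorem willmore_torus_unique_principal_orbit
    (n₁ n₂ : ℕ) (h₁ : 0 < n₁) (h₂ : 0 < n₂) (N : ℕ) (hN : N = n₁ + n₂) :
    let f : ℝ × ℝ → ℝ := fun t =>
      t.1 ^ n₁ * t.2 ^ n₂ *
        ((n₂ : ℝ) / (N : ℝ) * t.1 ^ (-2 : ℤ) * (n₁ : ℝ) +
          (n₁ : ℝ) / (N : ℝ) * t.2 ^ (-2 : ℤ) * (n₂ : ℝ)) ^ ((N : ℝ) / 2)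
    ∀ t : ℝ × ℝ, 0 < t.1 → 0 < t.2 → t.1 ^ 2 + t.2 ^ 2 = 1 →
      (fderiv ℝ f t = 0 ↔
        t = (Real.sqrt ((n₂ : ℝ) / (N : ℝ)), Real.sqrt ((n₁ : ℝ) / (N : ℝ)))) := by
  intro f t hx hy hsum
  obtain ⟨x, y⟩ := t
  simp only [Prod.fst, Prod.snd] at hx hy hsum
  have hN0 : 0 < N := by omega
  have hNpos : (0:ℝ) < N := by exact_mod_cast hN0
  have hn₁ : (0:ℝ) < n₁ := by exact_mod_cast h₁
  have hn₂ : (0:ℝ) < n₂ := by exact_mod_cast h₂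
  have hcast : (N:ℝ) = (n₁:ℝ) + n₂ := by rw [hN]; push_cast; ring
  have hxne : x ≠ 0 := hx.ne'
  have hyne : y ≠ 0 := hy.ne'
  have ha : (0:ℝ) < (n₁:ℝ) * n₂ / N := by positivity
  have hGpos : (0:ℝ) < (n₁:ℝ)*n₂/N * x^(-2:ℤ) + (n₁:ℝ)*n₂/N * y^(-2:ℤ) := by positivity
  have hf : f = fun t : ℝ × ℝ => t.1 ^ n₁ * t.2 ^ n₂ *
      ((n₁:ℝ)*n₂/N * t.1^(-2:ℤ) + (n₁:ℝ)*n₂/N * t.2^(-2:ℤ)) ^ ((N:ℝ)/2) := by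
    funext s
    show s.1 ^ n₁ * s.2 ^ n₂ * _ = _
    congr 1
    ring
  have hder := willmore_hasFDerivAt ((n₁:ℝ)*n₂/N) ((N:ℝ)/2) n₁ n₂ x y hxne hyne hGpos.ne'
  have hx1 : x ^ (n₁ - 1) * x = x ^ n₁ := by rw [← pow_succ]; congr 1; omega
  have hy1 : y ^ (n₂ - 1) * y = y ^ n₂ := by rw [← pow_succ]; congr 1; omega
  have hz2 : ∀ z : ℝ, z ^ (-2:ℤ) = (z^2)⁻¹ := fun z => by
    rw [zpow_neg]; norm_cast
  have hz3 : ∀ z : ℝ, z ^ (-3:ℤ) = (z^3)⁻¹ := fun z => by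
    rw [zpow_neg]; norm_cast
  have hGp : ((n₁:ℝ)*n₂/N * x^(-2:ℤ) + (n₁:ℝ)*n₂/N * y^(-2:ℤ)) ^ ((N:ℝ)/2)
      = ((n₁:ℝ)*n₂/N * x^(-2:ℤ) + (n₁:ℝ)*n₂/N * y^(-2:ℤ)) ^ ((N:ℝ)/2 - 1)
        * ((n₁:ℝ)*n₂/N * x^(-2:ℤ) + (n₁:ℝ)*n₂/N * y^(-2:ℤ)) := by
    rw [← Real.rpow_add_one hGpos.ne' ((N:ℝ)/2 - 1), sub_add_cancel]
  obtain ⟨A, B, hfd, hA, hB⟩ : ∃ A B : ℝ,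
      fderiv ℝ f (x, y) = A • ContinuousLinearMap.fst ℝ ℝ ℝ + B • ContinuousLinearMap.snd ℝ ℝ ℝ ∧
      A = (y ^ n₂ * ((n₁:ℝ)*n₂/N * x^(-2:ℤ) + (n₁:ℝ)*n₂/N * y^(-2:ℤ)) ^ ((N:ℝ)/2 - 1)
            * x ^ n₁ * ((n₁:ℝ)*n₂/N) / (x^3 * y^2)) * ((n₁:ℝ) * x^2 - (n₂:ℝ) * y^2) ∧
      B = (x ^ n₁ * ((n₁:ℝ)*n₂/N * x^(-2:ℤ) + (n₁:ℝ)*n₂/N * y^(-2:ℤ)) ^ ((N:ℝ)/2 - 1)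
            * y ^ n₂ * ((n₁:ℝ)*n₂/N) / (y^3 * x^2)) * ((n₂:ℝ) * y^2 - (n₁:ℝ) * x^2) := by
    refine ⟨((n₁:ℝ) * x ^ (n₁-1) * (y ^ n₂ * ((n₁:ℝ)*n₂/N * x^(-2:ℤ) + (n₁:ℝ)*n₂/N * y^(-2:ℤ)) ^ ((N:ℝ)/2)) + x ^ n₁ * y ^ n₂ * ((N:ℝ)/2 * ((n₁:ℝ)*n₂/N * x^(-2:ℤ) + (n₁:ℝ)*n₂/N * y^(-2:ℤ)) ^ ((N:ℝ)/2 - 1) * ((n₁:ℝ)*n₂/N * ((-2:ℝ) * x ^ (-3:ℤ))))), ((n₂:ℝ) * y ^ (n₂-1) * (x ^ n₁ * ((n₁:ℝ)*n₂/N * x^(-2:ℤ) + (n₁:ℝ)*n₂/N * y^(-2:ℤ)) ^ ((N:ℝ)/2)) + x ^ n₁ * y ^ n₂ * ((N:ℝ)/2 * ((n₁:ℝ)*n₂/N * x^(-2:ℤ) + (n₁:ℝ)*n₂/N * y^(-2:ℤ)) ^ ((N:ℝ)/2 - 1) * ((n₁:ℝ)*n₂/N * ((-2:ℝ) * y ^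 (-3:ℤ))))), ?_, ?_, ?_⟩
    · rw [hf]; exact hder.fderiv
    · rw [hGp]
      generalize ((n₁:ℝ)*n₂/N * x^(-2:ℤ) + (n₁:ℝ)*n₂/N * y^(-2:ℤ)) ^ ((N:ℝ)/2 - 1) = W
      rw [← hx1, hz2, hz2, hz3, hcast]
      have hs : (n₁:ℝ) + n₂ ≠ 0 := by positivity
      field_simp
      ring
    · rw [hGp]
      generalize ((n₁:ℝ)*n₂/N * x^(-2:ℤ) + (n₁:ℝ)*n₂/N * y^(-2:ℤ)) ^ ((N:ℝ)/2 - 1) = W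
      rw [← hy1, hz2, hz2, hz3, hcast]
      have hs : (n₁:ℝ) + n₂ ≠ 0 := by positivity
      field_simp
      ring
  have hfacA : (0:ℝ) < y ^ n₂ * ((n₁:ℝ)*n₂/N * x^(-2:ℤ) + (n₁:ℝ)*n₂/N * y^(-2:ℤ)) ^ ((N:ℝ)/2 - 1)
      * x ^ n₁ * ((n₁:ℝ)*n₂/N) / (x^3 * y^2) := by positivity
  have hfacB : (0:ℝ) < x ^ n₁ * ((n₁:ℝ)*n₂/N * x^(-2:ℤ) + (n₁:ℝ)*n₂/N * y^(-2:ℤ)) ^ ((N:ℝ)/2 - 1)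
      * y ^ n₂ * ((n₁:ℝ)*n₂/N) / (y^3 * x^2) := by positivity
  constructor
  · intro h0
    have hA0 : A = 0 := by
      have := congrArg (fun L : (ℝ × ℝ) →L[ℝ] ℝ => L (1, 0)) (hfd.symm.trans h0)
      simpa using this
    clear hder hGp hfd hf
    have hcond : (n₁:ℝ) * x^2 = (n₂:ℝ) * y^2 := by
      rw [hA] at hA0
      rcases mul_eq_zero.1 hA0 with h | h
      · exact absurd h hfacA.ne'
      · linarith [sub_eq_zero.1 h]
    have h2 : (n₂:ℝ) * x^2 + (n₂:ℝ) * y^2 = n₂ := by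
      have := congrArg (fun z => (n₂:ℝ) * z) hsum
      simpa [mul_add] using this
    have h3 : (n₁:ℝ) * x^2 + (n₁:ℝ) * y^2 = n₁ := by
      have := congrArg (fun z => (n₁:ℝ) * z) hsum
      simpa [mul_add] using this
    have hx2 : x^2 = (n₂:ℝ)/N := by
      rw [hcast, eq_div_iff (by positivity)]
      linarith
    have hy2 : y^2 = (n₁:ℝ)/N := by
      rw [hcast, eq_div_iff (by positivity)]
      linarith
    have e1 : x = Real.sqrt ((n₂:ℝ)/N) := by rw [← hx2, Real.sqrt_sq hx.le]
    have e2 : y = Real.sqrt ((n₁:ℝ)/N) := by rw [← hy2, Real.sqrt_sq hy.le]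
    rw [Prod.mk.injEq]
    exact ⟨e1, e2⟩
  · intro h0
    rw [Prod.mk.injEq] at h0
    obtain ⟨hxe, hye⟩ := h0
    have hx2 : x^2 = (n₂:ℝ)/N := by rw [hxe]; exact Real.sq_sqrt (by positivity)
    have hy2 : y^2 = (n₁:ℝ)/N := by rw [hye]; exact Real.sq_sqrt (by positivity)
    have hcond : (n₁:ℝ) * x^2 - (n₂:ℝ) * y^2 = 0 := by rw [hx2, hy2]; ring
    have hA0 : A = 0 := by rw [hA, hcond, mul_zero]
    have hB0 : B = 0 := by rw [hB]; rw [show (n₂:ℝ)*y^2 - (n₁:ℝ)*x^2 = 0 by linarith]; ring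
    rw [hfd, hA0, hB0]
    simp
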